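/- Let P be a poset equipped with an order-reversing involution p ↦ p' (i.e. p ≤ q implies q' ≤ p', and p'' = p). Assume saturation (for all p, q ∈ P, there exists r with r ≤ p and r ≤ q, or there exists r with r ≤ p and r ≤ q') and splitting (for every p ∈ P there exist r, s ≤ p with r ≤ s'). Then P is connected: for any p, q ∈ P there is a zig-zag from p to q, i.e. a finite sequence z₁, y₁, z₂, y₂, …, zₙ, yₙ, z₍ₙ₊₁₎ in P with z₁ = p, z₍ₙ₊₁₎ = q, and z_j ≤ y_j and z₍ⱼ₊₁₎ ≤ y_j for all j. -/

import Mathlib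

/-- Connectivity of a poset with order-reversing involution satisfying
saturation and splitting: any two elements are joined by a zig-zag. -/
theorem poset_connected_of_saturation_splitting
    {P : Type*} [PartialOrder P] (i : P → P)
    (hanti : ∀ p q : P, p ≤ q → i q ≤ i p) (hinv : ∀ p : P, i (i p) = p)
    (hsat : ∀ p q : P, (∃ r, r ≤ p ∧ r ≤ q) ∨ (∃ r, r ≤ p ∧ r ≤ i q))
    (hsplit : ∀ p : P, ∃ r s, r ≤ p ∧ s ≤ p ∧ r ≤ i s) :
    ∀ p q : P, ∃ (n : ℕ) (z : Fin (n + 1) → P) (y : Fin n → P),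
      z 0 = p ∧ z (Fin.last n) = q ∧
      ∀ j : Fin n, z j.castSucc ≤ y j ∧ z j.succ ≤ y j := by
  intro p q
  rcases hsat p q with ⟨r, hrp, hrq⟩ | ⟨r, hrp, hriq⟩
  · refine ⟨2, ![p, r, q], ![p, q], rfl, rfl, ?_⟩
    intro j; fin_cases j <;> simp_all
  · obtain ⟨s, t, hsq, htq, hst⟩ := hsplit q
    have htis : t ≤ i s := by have := hanti s (i t) hst; rwa [hinv] at this
    rcases hsat r s with ⟨u, hur, hus⟩ | ⟨u, hur, huis⟩
    · refine ⟨2, ![p, u, q], ![p, q], rfl, rfl, ?_⟩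
      intro j; fin_cases j <;> simp_all
      exacts [hur.trans hrp, hus.trans hsq]
    · refine ⟨3, ![p, u, t, q], ![p, i s, q], rfl, rfl, ?_⟩
      intro j; fin_cases j <;> simp_all
      exact hur.trans hrp
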